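/- Let r_1, r_2 ≥ 2 and q_1, q_2 ≥ 1 with q_1 coprime to r_2 and q_2 coprime to r_1. Then: (a) if f = (f_1, f_2) : ℤ → ZMod r_1 × ZMod r_2 is a polyfractal function that is q_1·q_2-periodic, then the component f_1 : ℤ → ZMod r_1 is q_1-periodic and the component f_2 : ℤ → ZMod r_2 is q_2-periodic; (b) conversely, for every q_1-periodic polyfractal function g_1 : ℤ → ZMod r_1 and every q_2-periodic polyfractal function g_2 : ℤ → ZMod r_2, the function x ↦ (g_1(x), g_2(x)) is a q_1·q_2-periodic polyfractal function ℤ → ZMod r_1 × ZMod r_2. -/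
import Mathlib


/-- The integer binomial coefficient `binom(x,δ) = x(x-1)⋯(x-δ+1)/δ!`. -/
noncomputable def ibinom (x : ℤ) (δ : ℕ) : ℤ := Ring.choose x δ

namespace Stmt18Aux

variable {B : Type*} [AddCommGroup B]

def fwd (f : ℤ → B) : ℤ → B := fun x => f (x + 1) - f x

lemma fwd_zero : fwd (0 : ℤ → B) = 0 := by
  funext x; simp [fwd]

lemma iter_fwd_zero (n : ℕ) : fwd^[n] (0 : ℤ → B) = 0 :=
  Function.iterate_fixed fwd_zero n

lemma iter_fwd_ge {f : ℤ → B} {n : ℕ} (h : fwd^[n] f = 0) {m : ℕ} (hm : n ≤ m) :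
    fwd^[m] f = 0 := by
  have : m = (m - n) + n := by omega
  rw [this, Function.iterate_add_apply, h, iter_fwd_zero]

lemma fwd_translate (f : ℤ → B) (t : ℤ) :
    fwd (fun x => f (x + t)) = fun x => fwd f (x + t) := by
  funext x
  have : x + t + 1 = x + 1 + t := by ring
  simp [fwd, this]

lemma iter_fwd_translate (n : ℕ) (f : ℤ → B) (t : ℤ) :
    fwd^[n] (fun x => f (x + t)) = fun x => fwd^[n] f (x + t) := by
  induction n generalizing f with
  | zero => simp
  | succ n ih =>
    rw [Function.iterate_succ_apply, Function.iterate_succ_apply, fwd_translate, ih]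

lemma fwd_sub (f g : ℤ → B) :
    fwd (fun x => f x - g x) = fun x => fwd f x - fwd g x := by
  funext x; simp [fwd]; abel

lemma iter_fwd_sub (n : ℕ) (f g : ℤ → B) :
    fwd^[n] (fun x => f x - g x) = fun x => fwd^[n] f x - fwd^[n] g x := by
  induction n generalizing f g with
  | zero => simp
  | succ n ih =>
    rw [Function.iterate_succ_apply, Function.iterate_succ_apply,
      Function.iterate_succ_apply, fwd_sub, ih]

lemma fwd_sum {ι : Type*} (s : Finset ι) (F : ι → ℤ → B) :
    fwd (fun x => ∑ i ∈ s, F i x) = fun x => ∑ i ∈ s, fwd (F i) x := by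
  funext x; simp [fwd, Finset.sum_sub_distrib]

lemma iter_fwd_sum {ι : Type*} (n : ℕ) (s : Finset ι) (F : ι → ℤ → B) :
    fwd^[n] (fun x => ∑ i ∈ s, F i x) = fun x => ∑ i ∈ s, fwd^[n] (F i) x := by
  induction n generalizing F with
  | zero => simp
  | succ n ih =>
    rw [Function.iterate_succ_apply, fwd_sum, ih]
    funext x
    simp [Function.iterate_succ_apply]

lemma ibinom_zero (x : ℤ) : ibinom x 0 = 1 := Ring.choose_zero_right x

lemma ibinom_pascal (x : ℤ) (δ : ℕ) :
    ibinom (x + 1) (δ + 1) = ibinom x δ + ibinom x (δ + 1) :=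
  Ring.choose_succ_succ x δ

lemma fwd_ibinom_succ (δ : ℕ) (b : B) :
    fwd (fun x => ibinom x (δ + 1) • b) = fun x => ibinom x δ • b := by
  funext x
  simp only [fwd, ibinom_pascal, add_smul]
  abel

lemma ibinom_kill (δ : ℕ) (b : B) :
    fwd^[δ + 1] (fun x => ibinom x δ • b) = 0 := by
  induction δ with
  | zero =>
    funext x
    simp [fwd, ibinom_zero]
  | succ δ ih =>
    rw [Function.iterate_succ_apply, fwd_ibinom_succ, ih]

lemma poly_kill {ι : Type*} (s : Finset ι) (d : ι → ℕ) (b : ι → B) (N : ℕ)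
    (hN : ∀ i ∈ s, d i < N) (f : ℤ → B)
    (hf : ∀ x, f x = ∑ i ∈ s, ibinom x (d i) • b i) :
    fwd^[N] f = 0 := by
  have hfe : f = fun x => ∑ i ∈ s, ibinom x (d i) • b i := funext hf
  rw [hfe, iter_fwd_sum]
  funext x
  refine Finset.sum_eq_zero fun i hi => ?_
  have h1 : fwd^[d i + 1] (fun x => ibinom x (d i) • b i) = 0 := ibinom_kill _ _
  have h2 : fwd^[N] (fun x => ibinom x (d i) • b i) = 0 :=
    iter_fwd_ge h1 (by have := hN i hi; omega)
  rw [h2]; rfl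

/-- Newton expansion: `f (x + n) = ∑_{k ≤ n} C(n,k) • Δᵏ f x`. -/
lemma expansion (f : ℤ → B) (n : ℕ) (x : ℤ) :
    f (x + (n : ℤ)) = ∑ k ∈ Finset.range (n + 1), n.choose k • fwd^[k] f x := by
  induction n generalizing x with
  | zero => simp
  | succ n ih =>
    have step : ∀ k, fwd^[k] f (x + 1) = fwd^[k] f x + fwd^[k + 1] f x := by
      intro k
      have : fwd (fwd^[k] f) x = fwd^[k] f (x + 1) - fwd^[k] f x := rfl
      rw [Function.iterate_succ_apply', this]
      abel
    have hx : x + ((n : ℤ) + 1) = (x + 1) + (n : ℤ) := by ring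
    push_cast
    rw [hx, ih (x + 1)]
    have lhs_eq : ∑ k ∈ Finset.range (n + 1), n.choose k • fwd^[k] f (x + 1)
        = (∑ k ∈ Finset.range (n + 1), n.choose k • fwd^[k] f x)
          + ∑ k ∈ Finset.range (n + 1), n.choose k • fwd^[k + 1] f x := by
      rw [← Finset.sum_add_distrib]
      refine Finset.sum_congr rfl fun k _ => ?_
      rw [step k, smul_add]
    rw [lhs_eq]
    -- now handle RHS
    rw [Finset.sum_range_succ' (fun k => (n + 1).choose k • fwd^[k] f x) (n + 1)]
    have : ∀ k, (n + 1).choose (k + 1) • fwd^[k + 1] f x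
        = n.choose k • fwd^[k + 1] f x + n.choose (k + 1) • fwd^[k + 1] f x := by
      intro k
      rw [Nat.choose_succ_succ, add_smul]
    simp only [this]
    rw [Finset.sum_add_distrib]
    have h2 : ∑ k ∈ Finset.range (n + 1), n.choose (k + 1) • fwd^[k + 1] f x
        + (n + 1).choose 0 • fwd^[0] f x
        = ∑ k ∈ Finset.range (n + 1), n.choose k • fwd^[k] f x := by
      have h := Finset.sum_range_succ' (fun k => n.choose k • fwd^[k] f x) (n + 1)
      rw [Finset.sum_range_succ] at h
      simp only [Nat.choose_succ_self, zero_smul, add_zero, Nat.choose_zero_right] at h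
      simpa [Nat.choose_zero_right] using h.symm
    rw [← h2]
    abel


lemma key (m q N : ℕ) (hm : ∀ b : B, m • b = 0 → b = 0)
    (f : ℤ → B) (hfN : fwd^[N] f = 0)
    (hper : ∀ x : ℤ, f (x + ((m * q : ℕ) : ℤ)) = f x) :
    ∀ x : ℤ, f (x + (q : ℤ)) = f x := by
  set g : ℤ → B := fun x => f (x + (q : ℤ)) - f x with hg
  have hgj : ∀ j x, fwd^[j] g x = fwd^[j] f (x + (q : ℤ)) - fwd^[j] f x := by
    intro j x
    have h1 : fwd^[j] g = fun x => fwd^[j] (fun y => f (y + (q : ℤ))) x - fwd^[j] f x := by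
      rw [hg, iter_fwd_sub]
    rw [h1, iter_fwd_translate]
  have hFper : ∀ j x, fwd^[j] f (x + ((m * q : ℕ) : ℤ)) = fwd^[j] f x := by
    intro j x
    have hf' : (fun y => f (y + ((m * q : ℕ) : ℤ))) = f := funext hper
    calc fwd^[j] f (x + ((m * q : ℕ) : ℤ))
        = fwd^[j] (fun y => f (y + ((m * q : ℕ) : ℤ))) x := by rw [iter_fwd_translate]
      _ = fwd^[j] f x := by rw [hf']
  have claimA : ∀ j x, ∑ i ∈ Finset.range m, fwd^[j] g (x + ((i * q : ℕ) : ℤ)) = 0 := by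
    intro j x
    have tele : ∀ i : ℕ, fwd^[j] g (x + ((i * q : ℕ) : ℤ))
        = fwd^[j] f (x + (((i + 1) * q : ℕ) : ℤ)) - fwd^[j] f (x + ((i * q : ℕ) : ℤ)) := by
      intro i
      rw [hgj]
      congr 2
      push_cast
      ring
    simp only [tele]
    rw [Finset.sum_range_sub (fun i => fwd^[j] f (x + ((i * q : ℕ) : ℤ)))]
    have h0q : ((0 * q : ℕ) : ℤ) = 0 := by simp
    rw [h0q, add_zero, hFper j x, sub_self]
  have claimB : ∀ t j, N ≤ j + t → fwd^[j] g = 0 := by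
    intro t
    induction t with
    | zero =>
      intro j hj
      funext x
      have h0 : fwd^[j] f = 0 := iter_fwd_ge hfN (by omega)
      rw [hgj, h0]
      simp
    | succ t ih =>
      intro j hj
      by_cases hc : N ≤ j + t
      · exact ih j hc
      · funext x
        have hz : ∀ k, 1 ≤ k → fwd^[k + j] g = 0 := fun k hk => ih (k + j) (by omega)
        have hterm : ∀ i ∈ Finset.range m,
            fwd^[j] g (x + ((i * q : ℕ) : ℤ)) = fwd^[j] g x := by
          intro i _
          rw [expansion (fwd^[j] g) (i * q) x]
          rw [Finset.sum_eq_single 0]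
          · simp
          · intro k hk hk0
            have hiter : fwd^[k] (fwd^[j] g) = fwd^[k + j] g :=
              (Function.iterate_add_apply fwd k j g).symm
            rw [hiter, hz k (by omega)]
            simp
          · intro h
            simp at h
        have hsum : ∑ _i ∈ Finset.range m, fwd^[j] g x = 0 := by
          rw [← Finset.sum_congr rfl hterm]
          exact claimA j x
        rw [Finset.sum_const, Finset.card_range] at hsum
        exact hm _ hsum
  have hg0 : g = 0 := claimB N 0 (by omega)
  intro x
  have hx := congrFun hg0 x
  rw [hg] at hx
  exact sub_eq_zero.mp hx


lemma zmod_cancel {m r : ℕ} (hr : 2 ≤ r) (h : Nat.Coprime m r) :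
    ∀ b : ZMod r, m • b = 0 → b = 0 := by
  haveI : NeZero r := ⟨by omega⟩
  intro b hb
  have hu : IsUnit ((m : ℕ) : ZMod r) := (ZMod.isUnit_iff_coprime m r).mpr h
  rw [nsmul_eq_mul] at hb
  exact (IsUnit.mul_right_eq_zero hu).mp hb

lemma per_mul {B' : Type*} (g : ℤ → B') (q : ℕ) (h : ∀ x : ℤ, g (x + (q : ℤ)) = g x) :
    ∀ (k : ℕ) (x : ℤ), g (x + ((k * q : ℕ) : ℤ)) = g x := by
  intro k
  induction k with
  | zero => simp
  | succ k ih =>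
    intro x
    have hcast : (((k + 1) * q : ℕ) : ℤ) = ((k * q : ℕ) : ℤ) + (q : ℤ) := by push_cast; ring
    rw [hcast, ← add_assoc, h, ih]

end Stmt18Aux


open Stmt18Aux

/-- Splitting variables: with `q₁` coprime to `r₂` and `q₂` coprime to `r₁`,
(a) the components of a `q₁q₂`-periodic polyfractal map `ℤ → ZMod r₁ × ZMod r₂` are
`q₁`-periodic, resp. `q₂`-periodic; (b) conversely, a pair of a `q₁`-periodic
polyfractal map into `ZMod r₁` and a `q₂`-periodic polyfractal map into `ZMod r₂`
combines to a `q₁q₂`-periodic polyfractal map. -/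
theorem stmt_18 (r₁ r₂ q₁ q₂ : ℕ) (hr₁ : 2 ≤ r₁) (hr₂ : 2 ≤ r₂)
    (hq₁ : 1 ≤ q₁) (hq₂ : 1 ≤ q₂)
    (hco₁ : Nat.Coprime q₁ r₂) (hco₂ : Nat.Coprime q₂ r₁) :
    (∀ f : ℤ → ZMod r₁ × ZMod r₂,
      (∃ c : ℕ →₀ ZMod r₁ × ZMod r₂,
        ∀ x : ℤ, f x = c.sum fun δ b => ibinom x δ • b) →
      (∀ x : ℤ, f (x + (q₁ * q₂ : ℕ)) = f x) →
      (∀ x : ℤ, (f (x + (q₁ : ℕ))).1 = (f x).1) ∧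
        (∀ x : ℤ, (f (x + (q₂ : ℕ))).2 = (f x).2)) ∧
    (∀ (g₁ : ℤ → ZMod r₁) (g₂ : ℤ → ZMod r₂),
      (∃ c₁ : ℕ →₀ ZMod r₁, ∀ x : ℤ, g₁ x = c₁.sum fun δ a => ibinom x δ • a) →
      (∀ x : ℤ, g₁ (x + (q₁ : ℕ)) = g₁ x) →
      (∃ c₂ : ℕ →₀ ZMod r₂, ∀ x : ℤ, g₂ x = c₂.sum fun δ a => ibinom x δ • a) →
      (∀ x : ℤ, g₂ (x + (q₂ : ℕ)) = g₂ x) →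
      (∃ c : ℕ →₀ ZMod r₁ × ZMod r₂,
        ∀ x : ℤ, (g₁ x, g₂ x) = c.sum fun δ b => ibinom x δ • b) ∧
        (∀ x : ℤ, (g₁ (x + (q₁ * q₂ : ℕ)), g₂ (x + (q₁ * q₂ : ℕ))) = (g₁ x, g₂ x))) := by
  constructor
  · rintro f ⟨c, hc⟩ hper
    set N : ℕ := c.support.sup id + 1 with hNdef
    have hN : ∀ δ ∈ c.support, id δ < N := fun δ hδ =>
      Nat.lt_succ_of_le (Finset.le_sup (f := id) hδ)
    constructor
    · -- first component
      set f₁ : ℤ → ZMod r₁ := fun x => (f x).1 with hf₁def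
      have hf₁ : ∀ x : ℤ, f₁ x = ∑ δ ∈ c.support, ibinom x (id δ) • (c δ).1 := by
        intro x
        rw [hf₁def]
        simp only [hc x, Finsupp.sum, Prod.fst_sum, Prod.smul_fst, id]
      have hkill : fwd^[N] f₁ = 0 :=
        poly_kill c.support id (fun δ => (c δ).1) N hN f₁ hf₁
      have hper₁ : ∀ x : ℤ, f₁ (x + ((q₂ * q₁ : ℕ) : ℤ)) = f₁ x := by
        intro x
        rw [hf₁def]
        simp only
        rw [mul_comm q₂ q₁, hper x]
      exact key q₂ q₁ N (zmod_cancel hr₁ hco₂) f₁ hkill hper₁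
    · -- second component
      set f₂ : ℤ → ZMod r₂ := fun x => (f x).2 with hf₂def
      have hf₂ : ∀ x : ℤ, f₂ x = ∑ δ ∈ c.support, ibinom x (id δ) • (c δ).2 := by
        intro x
        rw [hf₂def]
        simp only [hc x, Finsupp.sum, Prod.snd_sum, Prod.smul_snd, id]
      have hkill : fwd^[N] f₂ = 0 :=
        poly_kill c.support id (fun δ => (c δ).2) N hN f₂ hf₂
      have hper₂ : ∀ x : ℤ, f₂ (x + ((q₁ * q₂ : ℕ) : ℤ)) = f₂ x := by
        intro x
        rw [hf₂def]
        simp only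
        rw [hper x]
      exact key q₁ q₂ N (zmod_cancel hr₂ hco₁) f₂ hkill hper₂
  · rintro g₁ g₂ ⟨c₁, hc₁⟩ hp₁ ⟨c₂, hc₂⟩ hp₂
    constructor
    · refine ⟨c₁.mapRange (fun a => (a, (0 : ZMod r₂))) rfl
        + c₂.mapRange (fun b => ((0 : ZMod r₁), b)) rfl, fun x => ?_⟩
      rw [Finsupp.sum_add_index' (fun δ => smul_zero (ibinom x δ))
        (fun δ b₁ b₂ => smul_add (ibinom x δ) b₁ b₂)]
      rw [Finsupp.sum_mapRange_index (fun δ => smul_zero (ibinom x δ)),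
        Finsupp.sum_mapRange_index (fun δ => smul_zero (ibinom x δ))]
      have e1 : (c₁.sum fun δ a => ibinom x δ • ((a, (0 : ZMod r₂)) : ZMod r₁ × ZMod r₂))
          = ((c₁.sum fun δ a => ibinom x δ • a), (0 : ZMod r₂)) := by
        rw [Finsupp.sum, Finsupp.sum]
        refine Prod.ext ?_ ?_
        · rw [Prod.fst_sum]; simp
        · rw [Prod.snd_sum]; simp
      have e2 : (c₂.sum fun δ b => ibinom x δ • (((0 : ZMod r₁), b) : ZMod r₁ × ZMod r₂))
          = ((0 : ZMod r₁), (c₂.sum fun δ b => ibinom x δ • b)) := by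
        rw [Finsupp.sum, Finsupp.sum]
        refine Prod.ext ?_ ?_
        · rw [Prod.fst_sum]; simp
        · rw [Prod.snd_sum]; simp
      rw [e1, e2, hc₁ x, hc₂ x]
      simp [Prod.ext_iff]
    · intro x
      have h1 : g₁ (x + ((q₁ * q₂ : ℕ) : ℤ)) = g₁ x := by
        rw [mul_comm q₁ q₂]
        exact per_mul g₁ q₁ hp₁ q₂ x
      have h2 : g₂ (x + ((q₁ * q₂ : ℕ) : ℤ)) = g₂ x := per_mul g₂ q₂ hp₂ q₁ x
      rw [h1, h2]
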